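/- arXiv:2110.09330 — 2 statements merged into one kernel-verified Lean document; each statement's English description precedes it below -/
import Mathlib

section
/- Let q ≥ 2 and n ≥ 7 with n odd, and suppose T is a natural number such that q^{3(n−4)}·T = Σ_τ x_τ·(q^{n−3}−1)/(q−1), where each x_τ = 1 + C_τ/((q^{n−2}−1)/(q−1)) with C_τ ∈ ℕ and the sum Σ_τ C_τ is divisible by (q^{n−2}−1)/(q−1). Then T ≡ 0 (mod q+1). -/
/-- If `q^(3(n-4)) * T = Σ_τ x_τ * (q^(n-3)-1)/(q-1)` with
`x_τ = 1 + C_τ / ((q^(n-2)-1)/(q-1))` (cleared of denominators below) and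
`(q^(n-2)-1)/(q-1) ∣ Σ_τ C_τ`, then `T ≡ 0 (mod q+1)`. -/
theorem stmt_7 (q n T : ℕ) (hq : 2 ≤ q) (hn : 7 ≤ n) (hodd : Odd n)
    {S : Type*} [Fintype S] (C : S → ℕ)
    (hcount : q ^ (3 * (n - 4)) * T * ∑ i ∈ Finset.range (n - 2), q ^ i
        = ∑ τ : S, ((∑ i ∈ Finset.range (n - 2), q ^ i) + C τ)
            * ∑ i ∈ Finset.range (n - 3), q ^ i)
    (hdvd : (∑ i ∈ Finset.range (n - 2), q ^ i) ∣ ∑ τ : S, C τ) :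
    T ≡ 0 [MOD q + 1] := by
  obtain ⟨k, hk⟩ := hodd
  have h1 : ¬ Even (n - 2) := by
    rw [Nat.not_even_iff_odd]; exact ⟨k - 1, by omega⟩
  have h2 : Even (n - 3) := ⟨k - 1, by omega⟩
  have h3 : Odd (3 * (n - 4)) := ⟨3 * k - 5, by omega⟩
  have hq0 : (q : ZMod (q + 1)) = -1 := by
    have h := ZMod.natCast_self (q + 1)
    push_cast at h
    linear_combination h
  have H := congrArg (Nat.cast : ℕ → ZMod (q + 1)) hcount
  push_cast at H
  rw [hq0] at H
  rw [neg_one_geom_sum, neg_one_geom_sum, if_neg h1, if_pos h2] at H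
  simp only [mul_zero, Finset.sum_const_zero, mul_one, h3.neg_one_pow] at H
  have hT : (T : ZMod (q + 1)) = 0 := by linear_combination -H
  have : (q + 1) ∣ T := by
    exact_mod_cast (ZMod.natCast_eq_zero_iff T (q + 1)).mp hT
  exact (Nat.modEq_zero_iff_dvd).mpr this
end

section
/- Let q be a prime power, m an integer with 0 ≤ m, and j, n with m + j < n. The number of j-dimensional projective subspaces of PG(n,q) disjoint from a fixed m-dimensional subspace equals q^{(m+1)(j+1)} · [n−m choose j+1]_q, where [·]_q is the Gaussian binomial coefficient. -/
open Module Submodule LinearMap Function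

section aux

variable {K V : Type*} [Field K] [Fintype K] [AddCommGroup V] [Module K V]
  [FiniteDimensional K V]

/-- counting subspaces of dimension `d` meeting `W` trivially, given a complement `C`. -/
private theorem count_disjoint (W C : Submodule K V) (hC : IsCompl W C) (d : ℕ) :
    Nat.card {U : Submodule K V // Module.finrank K U = d ∧ U ⊓ W = ⊥}
      = Fintype.card K ^ (Module.finrank K W * d)
        * Nat.card {X : Submodule K C // Module.finrank K X = d} := by
  classical
  set pW := W.projectionOnto C hC with hpWdef
  set pC := C.projectionOnto W hC.symm with hpCdef
  -- the graph map
  let g : ∀ X : Submodule K C, (X →ₗ[K] W) → (X →ₗ[K] V) :=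
    fun X f => C.subtype ∘ₗ X.subtype + W.subtype ∘ₗ f
  have hgapply : ∀ (X : Submodule K C) (f : X →ₗ[K] W) (x : X),
      g X f x = (x : V) + (f x : V) := fun X f x => rfl
  have hpCg : ∀ (X : Submodule K C) (f : X →ₗ[K] W) (x : X), pC (g X f x) = (x : C) := by
    intro X f x
    rw [hgapply, map_add]
    rw [hpCdef]
    rw [Submodule.projectionOnto_apply_left hC.symm (x : C),
      Submodule.projectionOnto_apply_of_mem_right hC.symm (f x).2, add_zero]
  have hpWg : ∀ (X : Submodule K C) (f : X →ₗ[K] W) (x : X), pW (g X f x) = f x := by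
    intro X f x
    rw [hgapply, map_add, hpWdef]
    rw [Submodule.projectionOnto_apply_of_mem_right hC ((x : C)).2,
      Submodule.projectionOnto_apply_left hC (f x), zero_add]
  have hginj : ∀ (X : Submodule K C) (f : X →ₗ[K] W), Injective (g X f) := by
    intro X f x y hxy
    have := congrArg pC hxy
    rw [hpCg, hpCg] at this
    exact Subtype.ext this
  have hrank : ∀ (X : Submodule K C) (f : X →ₗ[K] W),
      Module.finrank K (LinearMap.range (g X f)) = Module.finrank K X := by
    intro X f; exact LinearMap.finrank_range_of_inj (hginj X f)
  have hdisj : ∀ (X : Submodule K C) (f : X →ₗ[K] W),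
      LinearMap.range (g X f) ⊓ W = ⊥ := by
    intro X f
    rw [Submodule.eq_bot_iff]
    rintro z ⟨⟨x, rfl⟩, hzW⟩
    have h0 : pC (g X f x) = 0 :=
      Submodule.projectionOnto_apply_of_mem_right hC.symm hzW
    rw [hpCg] at h0
    have : x = 0 := Subtype.ext h0
    rw [this, map_zero]
  have hmap : ∀ (X : Submodule K C) (f : X →ₗ[K] W),
      (LinearMap.range (g X f)).map pC = X := by
    intro X f
    rw [← LinearMap.range_comp]
    have : pC ∘ₗ g X f = X.subtype := LinearMap.ext fun x => hpCg X f x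
    rw [this, Submodule.range_subtype]
  let Φ : ((X : {X : Submodule K C // Module.finrank K X = d}) × (X.1 →ₗ[K] W)) →
      {U : Submodule K V // Module.finrank K U = d ∧ U ⊓ W = ⊥} :=
    fun p => ⟨LinearMap.range (g p.1.1 p.2), by rw [hrank]; exact p.1.2, hdisj p.1.1 p.2⟩
  have hΦbij : Bijective Φ := by
    constructor
    · rintro ⟨⟨X₁, h₁⟩, f₁⟩ ⟨⟨X₂, h₂⟩, f₂⟩ heq
      have hr : LinearMap.range (g X₁ f₁) = LinearMap.range (g X₂ f₂) :=
        congrArg Subtype.val heq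
      obtain rfl : X₁ = X₂ := by rw [← hmap X₁ f₁, ← hmap X₂ f₂, hr]
      obtain rfl : f₁ = f₂ := by
        apply LinearMap.ext
        intro x
        have hx : g X₁ f₁ x ∈ LinearMap.range (g X₁ f₂) := by
          rw [← hr]; exact ⟨x, rfl⟩
        obtain ⟨y, hy⟩ := hx
        have hxy : y = x := by
          have := congrArg pC hy
          rw [hpCg, hpCg] at this
          exact Subtype.ext this
        have := congrArg pW hy
        rw [hpWg, hpWg, hxy] at this
        exact this.symm
      rfl
    · rintro ⟨U, hU, hUW⟩
      let pCU : U →ₗ[K] C := pC ∘ₗ U.subtype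
      have hinj : Injective pCU := by
        rw [← LinearMap.ker_eq_bot]
        rw [Submodule.eq_bot_iff]
        rintro u hu
        have hmem : (u : V) ∈ W := by
          have : pC (u : V) = 0 := hu
          rw [hpCdef] at this
          exact (Submodule.projectionOnto_apply_eq_zero_iff hC.symm).mp this
        have : (u : V) ∈ U ⊓ W := ⟨u.2, hmem⟩
        rw [hUW] at this
        exact Subtype.ext this
      set X := LinearMap.range pCU with hXdef
      have hX : Module.finrank K X = d := by
        rw [hXdef, LinearMap.finrank_range_of_inj hinj, hU]
      let e : U ≃ₗ[K] X := LinearEquiv.ofInjective pCU hinj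
      let f : X →ₗ[K] W := (pW ∘ₗ U.subtype) ∘ₗ (e.symm : X →ₗ[K] U)
      refine ⟨⟨⟨X, hX⟩, f⟩, ?_⟩
      apply Subtype.ext
      show LinearMap.range (g X f) = U
      have hle : LinearMap.range (g X f) ≤ U := by
        rintro z ⟨x, rfl⟩
        set u : U := e.symm x with hudef
        have hCx : (x : C) = pC (u : V) := by
          have : (e u : C) = pCU u := rfl
          rw [hudef, e.apply_symm_apply] at this
          exact this
        have hfx : (f x : V) = pW (u : V) := rfl
        have : g X f x = (u : V) := by
          rw [hgapply, hCx, hfx, add_comm]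
          exact Submodule.projection_add_projection_eq_self hC (u : V)
        rw [this]; exact u.2
      exact Submodule.eq_of_le_of_finrank_eq hle (by rw [hrank, hX, hU])
  have hcard1 : Nat.card {U : Submodule K V // Module.finrank K U = d ∧ U ⊓ W = ⊥}
      = Nat.card ((X : {X : Submodule K C // Module.finrank K X = d}) × (X.1 →ₗ[K] W)) :=
    (Nat.card_congr (Equiv.ofBijective Φ hΦbij)).symm
  have e2 : ((X : {X : Submodule K C // Module.finrank K X = d}) × (X.1 →ₗ[K] W)) ≃
      ({X : Submodule K C // Module.finrank K X = d} × ((Fin d → K) →ₗ[K] W)) :=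
    Equiv.sigmaEquivProdOfEquiv fun X =>
      (LinearEquiv.arrowCongr (LinearEquiv.ofFinrankEq _ _ (by
        rw [X.2, Module.finrank_fintype_fun_eq_card, Fintype.card_fin]))
        (LinearEquiv.refl K W)).toEquiv
  haveI : Finite V := Module.finite_of_finite K
  haveI : Finite ((Fin d → K) →ₗ[K] W) :=
    Finite.of_injective _ DFunLike.coe_injective
  have hHom : Nat.card ((Fin d → K) →ₗ[K] W)
      = Fintype.card K ^ (Module.finrank K W * d) := by
    letI : Fintype ((Fin d → K) →ₗ[K] W) := Fintype.ofFinite _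
    rw [Nat.card_eq_fintype_card, card_eq_pow_finrank (K := K), Module.finrank_linearMap,
      Module.finrank_fintype_fun_eq_card, Fintype.card_fin, mul_comm]
  rw [hcard1, Nat.card_congr e2, Nat.card_prod, hHom, mul_comm]

end aux

private noncomputable def subCountEquiv {K M N : Type*} [Field K] [AddCommGroup M] [Module K M]
    [AddCommGroup N] [Module K N] (e : M ≃ₗ[K] N) (d : ℕ) :
    {U : Submodule K M // Module.finrank K U = d} ≃
      {U : Submodule K N // Module.finrank K U = d} :=
  { toFun := fun U => ⟨U.1.map (e : M →ₗ[K] N), by rw [LinearEquiv.finrank_map_eq]; exact U.2⟩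
    invFun := fun U => ⟨U.1.map (e.symm : N →ₗ[K] M), by rw [LinearEquiv.finrank_map_eq]; exact U.2⟩
    left_inv := fun U => by
      apply Subtype.ext
      exact (Submodule.map_symm_eq_iff e).mpr rfl
    right_inv := fun U => by
      apply Subtype.ext
      exact (Submodule.map_symm_eq_iff e).mp rfl }

/-- Segre's formula: over a finite field `K` with `q` elements, the number of
`j`-dimensional projective subspaces of `PG(n,q)` disjoint from a fixed
`m`-dimensional projective subspace equals `q^((m+1)(j+1))` times the Gaussian
binomial `[n-m choose j+1]_q`, realised here as the number of
`(j+1)`-dimensional linear subspaces of `K^(n-m)`. -/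
theorem stmt_11 (q n m j : ℕ) (K : Type*) [Field K] [Fintype K]
    (hK : Fintype.card K = q) (h : m + j < n)
    (W : Submodule K (Fin (n + 1) → K)) (hW : Module.finrank K W = m + 1) :
    Nat.card {U : Submodule K (Fin (n + 1) → K) //
        Module.finrank K U = j + 1 ∧ U ⊓ W = ⊥}
      = q ^ ((m + 1) * (j + 1))
        * Nat.card {U : Submodule K (Fin (n - m) → K) // Module.finrank K U = j + 1} := by
  classical
  obtain ⟨C, hC⟩ := Submodule.exists_isCompl W
  have hV : Module.finrank K (Fin (n + 1) → K) = n + 1 := by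
    rw [Module.finrank_fintype_fun_eq_card, Fintype.card_fin]
  have hCrank : Module.finrank K C = n - m := by
    have h1 := Submodule.finrank_add_eq_of_isCompl hC
    rw [hW, hV] at h1
    omega
  have e : C ≃ₗ[K] (Fin (n - m) → K) :=
    LinearEquiv.ofFinrankEq _ _ (by
      rw [hCrank, Module.finrank_fintype_fun_eq_card, Fintype.card_fin])
  rw [count_disjoint W C hC (j + 1), hK, hW,
    Nat.card_congr (subCountEquiv e (j + 1))]
end
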